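/- Spread of a power: Let F be a field of characteristic ≠ 2 containing r with r² = -k ≠ 0, and let a, b ∈ F with a² + kb² ≠ 0. Set A = a+br, B = a-br, s = kb²/(a²+kb²), and tₙ = -(Aⁿ - Bⁿ)²/(4AⁿBⁿ). Then t₀ = 0, t₁ = s, and tₙ = 2(1-2s)tₙ₋₁ - tₙ₋₂ + 2s for all n ≥ 2; hence tₙ = Sₙ(s) where Sₙ is the n-th spread polynomial. -/
import Mathlib


def spread {F : Type*} [Field F] : ℕ → F → F
  | 0, _ => 0
  | 1, s => s
  | (n + 2), s => 2 * (1 - 2 * s) * spread (n + 1) s - spread n s + 2 * s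

lemma key_identity {F : Type*} [Field F] (h2 : (2 : F) ≠ 0)
    (A B P Q : F) (hA : A ≠ 0) (hB : B ≠ 0) (hP : P ≠ 0) (hQ : Q ≠ 0) :
    -(P * A ^ 2 - Q * B ^ 2) ^ 2 / (4 * (P * A ^ 2) * (Q * B ^ 2)) =
      ((A ^ 2 + B ^ 2) / (A * B)) *
        (-(P * A - Q * B) ^ 2 / (4 * (P * A) * (Q * B)))
      - (-(P - Q) ^ 2 / (4 * P * Q))
      + (-(A - B) ^ 2 / (2 * A * B)) := by
  have h4 : (4 : F) ≠ 0 := by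
    have : (4 : F) = 2 * 2 := by norm_num
    rw [this]; exact mul_ne_zero h2 h2
  have hd1 : (A * B) * (4 * (P * A) * (Q * B)) ≠ 0 := by
    apply mul_ne_zero (mul_ne_zero hA hB)
    exact mul_ne_zero (mul_ne_zero h4 (mul_ne_zero hP hA)) (mul_ne_zero hQ hB)
  have hd2 : (4 : F) * P * Q ≠ 0 := mul_ne_zero (mul_ne_zero h4 hP) hQ
  have hd3 : (2 : F) * A * B ≠ 0 := mul_ne_zero (mul_ne_zero h2 hA) hB
  have hdL : (4 : F) * (P * A ^ 2) * (Q * B ^ 2) ≠ 0 := by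
    apply mul_ne_zero (mul_ne_zero h4 (mul_ne_zero hP (pow_ne_zero _ hA)))
    exact mul_ne_zero hQ (pow_ne_zero _ hB)
  rw [div_mul_div_comm, div_sub_div _ _ hd1 hd2, div_add_div _ _ (mul_ne_zero hd1 hd2) hd3,
    div_eq_div_iff hdL (mul_ne_zero (mul_ne_zero hd1 hd2) hd3)]
  ring

theorem spread_of_power {F : Type*} [Field F] (hchar : (2 : F) ≠ 0)
    (k r a b : F) (hk : k ≠ 0) (hr : r ^ 2 = -k)
    (hnn : a ^ 2 + k * b ^ 2 ≠ 0) :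
    let A := a + b * r
    let B := a - b * r
    let s := k * b ^ 2 / (a ^ 2 + k * b ^ 2)
    let t : ℕ → F := fun n => -(A ^ n - B ^ n) ^ 2 / (4 * A ^ n * B ^ n)
    t 0 = 0 ∧ t 1 = s ∧
    (∀ n : ℕ, 2 ≤ n → t n = 2 * (1 - 2 * s) * t (n - 1) - t (n - 2) + 2 * s) ∧
    (∀ n : ℕ, t n = spread n s) := by
  intro A B s t
  have h4 : (4 : F) ≠ 0 := by
    have : (4 : F) = 2 * 2 := by norm_num
    rw [this]; exact mul_ne_zero hchar hchar
  have hAB : A * B = a ^ 2 + k * b ^ 2 := by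
    have : A * B = a ^ 2 - b ^ 2 * r ^ 2 := by simp only [A, B]; ring
    rw [this, hr]; ring
  have hABne : A * B ≠ 0 := by rw [hAB]; exact hnn
  have hA : A ≠ 0 := left_ne_zero_of_mul hABne
  have hB : B ≠ 0 := right_ne_zero_of_mul hABne
  have hdiff : (A - B) ^ 2 = -(4 * k * b ^ 2) := by
    have : (A - B) ^ 2 = 4 * b ^ 2 * r ^ 2 := by simp only [A, B]; ring
    rw [this, hr]; ring
  have hsum : A ^ 2 + B ^ 2 = 2 * (a ^ 2 - k * b ^ 2) := by
    have : A ^ 2 + B ^ 2 = 2 * a ^ 2 + 2 * b ^ 2 * r ^ 2 := by simp only [A, B]; ring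
    rw [this, hr]; ring
  have hs : s * (a ^ 2 + k * b ^ 2) = k * b ^ 2 := div_mul_cancel₀ _ hnn
  have h2s : 2 * s = -(A - B) ^ 2 / (2 * A * B) := by
    rw [eq_div_iff (mul_ne_zero (mul_ne_zero hchar hA) hB)]
    linear_combination 4 * s * hAB + 4 * hs + hdiff
  have hc : 2 * (1 - 2 * s) = (A ^ 2 + B ^ 2) / (A * B) := by
    rw [eq_div_iff hABne]
    linear_combination (2 - 4 * s) * hAB - 4 * hs - hsum
  have ht0 : t 0 = 0 := by simp [t]
  have ht1 : t 1 = s := by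
    show -(A ^ 1 - B ^ 1) ^ 2 / (4 * A ^ 1 * B ^ 1) = s
    simp only [pow_one]
    rw [div_eq_iff (mul_ne_zero (mul_ne_zero h4 hA) hB)]
    linear_combination -hdiff - 4 * s * hAB - 4 * hs
  have hrec : ∀ n : ℕ, t (n + 2) = 2 * (1 - 2 * s) * t (n + 1) - t n + 2 * s := by
    intro n
    rw [hc, h2s]
    have e2 : ∀ x : F, x ^ (n + 2) = x ^ n * x ^ 2 := fun x => by ring
    have e1 : ∀ x : F, x ^ (n + 1) = x ^ n * x := fun x => by ring
    have eL : 4 * A ^ (n + 2) * B ^ (n + 2) = 4 * (A ^ n * A ^ 2) * (B ^ n * B ^ 2) := by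
      rw [e2, e2]
    have eM : 4 * A ^ (n + 1) * B ^ (n + 1) = 4 * (A ^ n * A) * (B ^ n * B) := by
      rw [e1, e1]
    simp only [t, e1, e2, eL, eM]
    exact key_identity hchar A B (A ^ n) (B ^ n) hA hB (pow_ne_zero n hA) (pow_ne_zero n hB)
  refine ⟨ht0, ht1, ?_, ?_⟩
  · intro n hn
    obtain ⟨m, rfl⟩ : ∃ m, n = m + 2 := ⟨n - 2, by omega⟩
    simpa using hrec m
  · intro n
    induction n using Nat.twoStepInduction with
    | zero => simpa [spread] using ht0
    | one => simpa [spread] using ht1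
    | more m ih1 ih2 =>
      rw [hrec m, ih1, ih2]
      rfl
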